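/- Let p ≥ 3 be a prime and d ≥ 1. Let λ be a partition of p²d with at most n parts satisfying the Doty digit condition, with not every part of λ divisible by p; let μ be a partition of d with at most n parts such that λ strictly dominates p²μ := (p²μ_1, …, p²μ_n). Set γ := λ − p²μ − (p−1)ρ ∈ ℤ^n. Then there exists 1 ≤ i < n with ⟨(p−1)ρ − γ, α_i^∨⟩ < 0, i.e., γ_i − γ_{i+1} > p − 1. (This is the inequality proved in Corollary 6.3, showing γ cannot be a weight of the Steinberg module St_1.) -/

import Mathlib

/-- `l` is a partition of `d` with at most `n` parts: a weakly decreasing tuple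
(indexed from 0, vanishing from index `n` on) of nonnegative integers summing to `d`. -/
def IsPartition (n d : ℕ) (l : ℕ → ℕ) : Prop :=
  Antitone l ∧ (∀ i, n ≤ i → l i = 0) ∧ ∑ i ∈ Finset.range n, l i = d

/-- Doty digit condition: if the `j`-th base-`p` digit of the `i`-th part is not `p - 1`,
then the `j`-th digit of every later part is `0`. -/
def DotyCondition (p : ℕ) (l : ℕ → ℕ) : Prop :=
  ∀ i j i', i < i' → (l i / p ^ j) % p ≠ p - 1 → (l i' / p ^ j) % p = 0

/-- `Dominates l m` : `l` dominates `m`, i.e. `m ⊴ l`. -/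
def Dominates (l m : ℕ → ℕ) : Prop :=
  ∀ k, ∑ i ∈ Finset.range k, m i ≤ ∑ i ∈ Finset.range k, l i

/-- decomposition of `x % p^2` into base-`p` digits -/
lemma mod_sq_digits (p x : ℕ) (hp : 0 < p) :
    x % p ^ 2 = x % p + p * (x / p % p) := by
  have h2 : (p : ℕ) ^ 2 = p * p := sq p
  have hdiv : x % (p * p) / p = x / p % p := Nat.mod_mul_right_div_self x p p
  have hmod : x % (p * p) % p = x % p := Nat.mod_mod_of_dvd x ⟨p, rfl⟩
  rw [h2]
  conv_lhs => rw [← Nat.div_add_mod (x % (p * p)) p]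
  rw [hdiv, hmod, Nat.add_comm]

theorem gamma_not_weight_of_steinberg
    (p n d : ℕ) (hp : p.Prime) (hp3 : 3 ≤ p) (hd : 1 ≤ d)
    (lam : ℕ → ℕ) (hlam : IsPartition n (p ^ 2 * d) lam) (hD : DotyCondition p lam)
    (hnotall : ¬ ∀ i, p ∣ lam i)
    (mu : ℕ → ℕ) (hmu : IsPartition n d mu)
    (hdom : Dominates lam (fun i => p ^ 2 * mu i))
    (hne : lam ≠ fun i => p ^ 2 * mu i)
    -- `γ := λ - p²μ - (p-1)ρ` where `ρ i = n - 1 - i` (0-based indexing)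
    (gamma : ℕ → ℤ)
    (hgamma : ∀ i, gamma i =
      (lam i : ℤ) - p ^ 2 * mu i - (p - 1) * ((n : ℤ) - 1 - (i : ℤ))) :
    ∃ i : ℕ, i + 1 < n ∧ (p - 1 : ℤ) < gamma i - gamma (i + 1) := by
  by_contra hcon
  push_neg at hcon
  have hppos : 0 < p := hp.pos
  have hp2pos : 0 < p ^ 2 := pow_pos hppos 2
  set q : ℕ → ℕ := fun i => lam i / p ^ 2 with hq
  set m : ℕ → ℕ := fun i => lam i % p ^ 2 with hm
  have hdecomp : ∀ i, lam i = p ^ 2 * q i + m i := fun i => (Nat.div_add_mod _ _).symm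
  have hmlt : ∀ i, m i < p ^ 2 := fun i => Nat.mod_lt _ hp2pos
  -- m is weakly decreasing (from the Doty condition)
  have hmdec : ∀ i, m (i + 1) ≤ m i := by
    intro i
    have h0 : lam (i + 1) % p ≤ lam i % p := by
      by_cases hc : lam i % p = p - 1
      · have := Nat.mod_lt (lam (i + 1)) hppos
        omega
      · have h := hD i 0 (i + 1) (Nat.lt_succ_self i) (by simpa using hc)
        simp only [pow_zero, Nat.div_one] at h
        omega
    have h1 : lam (i + 1) / p % p ≤ lam i / p % p := by
      by_cases hc : lam i / p % p = p - 1
      · have := Nat.mod_lt (lam (i + 1) / p) hppos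
        omega
      · have h := hD i 1 (i + 1) (Nat.lt_succ_self i) (by simpa using hc)
        simp only [pow_one] at h
        omega
    have hmul : p * (lam (i + 1) / p % p) ≤ p * (lam i / p % p) :=
      Nat.mul_le_mul_left p h1
    have e1 := mod_sq_digits p (lam i) hppos
    have e2 := mod_sq_digits p (lam (i + 1)) hppos
    simp only [hm]
    omega
  -- key division fact in ℤ
  have hkey : ∀ A B : ℤ, (p : ℤ) ^ 2 * A ≤ (p : ℤ) ^ 2 * B + 2 * ((p : ℤ) - 1) → A ≤ B := by
    intro A B h
    have hpc : (3 : ℤ) ≤ (p : ℤ) := by exact_mod_cast hp3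
    have hlt : (2 : ℤ) * ((p : ℤ) - 1) < (p : ℤ) ^ 2 := by nlinarith
    have h2 : (p : ℤ) ^ 2 * A < (p : ℤ) ^ 2 * (B + 1) := by
      have := mul_add ((p : ℤ) ^ 2) B 1
      linarith
    have hpos : (0 : ℤ) < (p : ℤ) ^ 2 := by positivity
    have := lt_of_mul_lt_mul_left h2 (le_of_lt hpos)
    omega
  -- f i := μ i - q i is weakly decreasing on [0, n)
  have hfdec : ∀ i, i + 1 < n → (mu (i + 1) : ℤ) - q (i + 1) ≤ (mu i : ℤ) - q i := by
    intro i hi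
    have hg := hcon i hi
    rw [hgamma i, hgamma (i + 1)] at hg
    push_cast at hg
    have hlami : (lam i : ℤ) = (p : ℤ) ^ 2 * q i + m i := by exact_mod_cast hdecomp i
    have hlami1 : (lam (i + 1) : ℤ) = (p : ℤ) ^ 2 * q (i + 1) + m (i + 1) := by
      exact_mod_cast hdecomp (i + 1)
    have hmd : (m (i + 1) : ℤ) ≤ (m i : ℤ) := by exact_mod_cast hmdec i
    have hg2 : (p : ℤ) ^ 2 * ((q i : ℤ) - q (i + 1)) ≤
        (p : ℤ) ^ 2 * ((mu i : ℤ) - mu (i + 1)) + 2 * ((p : ℤ) - 1) := by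
      rw [hlami, hlami1] at hg
      ring_nf at hg hmd ⊢
      linarith
    have := hkey _ _ hg2
    linarith
  -- f 0 ≤ 0, from dominance at k = 1
  have hf0 : (mu 0 : ℤ) - q 0 ≤ 0 := by
    have h1 := hdom 1
    simp only [Finset.sum_range_one] at h1
    have hlt : lam 0 < p ^ 2 * (q 0 + 1) := by
      have hA := hdecomp 0
      have hB := hmlt 0
      rw [Nat.mul_succ]
      omega
    have h2 : p ^ 2 * mu 0 < p ^ 2 * (q 0 + 1) := lt_of_le_of_lt h1 hlt
    have h3 : mu 0 < q 0 + 1 := Nat.lt_of_mul_lt_mul_left h2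
    have h4 : (mu 0 : ℤ) ≤ (q 0 : ℤ) := by exact_mod_cast Nat.lt_succ_iff.mp h3
    linarith
  -- every f i (for i < n) is ≤ 0
  have hfle : ∀ i, i < n → (mu i : ℤ) - q i ≤ 0 := by
    intro i
    induction i with
    | zero => intro _; exact hf0
    | succ k ih =>
      intro hk
      have hk' : k < n := Nat.lt_of_succ_lt hk
      exact le_trans (hfdec k hk) (ih hk')
  -- hence the sum of f over range n is ≤ 0
  have hsum_le : ∑ i ∈ Finset.range n, ((mu i : ℤ) - q i) ≤ 0 :=
    Finset.sum_nonpos fun i hi => hfle i (Finset.mem_range.mp hi)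
  -- but the sum is ≥ 1, since some m i > 0 and Σ m = p² * Σ f
  obtain ⟨i0, hi0⟩ := not_forall.mp hnotall
  have hi0n : i0 < n := by
    by_contra h
    exact hi0 (hlam.2.1 i0 (le_of_not_gt h) ▸ dvd_zero p)
  have hmi0 : 1 ≤ m i0 := by
    rcases Nat.eq_zero_or_pos (m i0) with h | h
    · exfalso
      apply hi0
      have : p ^ 2 ∣ lam i0 := Nat.dvd_of_mod_eq_zero h
      exact dvd_trans (dvd_pow_self p two_ne_zero) this
    · exact h
  have hsumm : 1 ≤ ∑ i ∈ Finset.range n, m i :=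
    le_trans hmi0 (Finset.single_le_sum (fun i _ => Nat.zero_le _)
      (Finset.mem_range.mpr hi0n))
  have hsumlam : ∑ i ∈ Finset.range n, lam i = p ^ 2 * d := hlam.2.2
  have hsummu : ∑ i ∈ Finset.range n, mu i = d := hmu.2.2
  have h2 : ∑ i ∈ Finset.range n, (lam i : ℤ) = (p : ℤ) ^ 2 * d := by
    have := congrArg (Nat.cast : ℕ → ℤ) hsumlam
    push_cast at this
    exact this
  have h3 : ∑ i ∈ Finset.range n, (mu i : ℤ) = (d : ℤ) := by
    have := congrArg (Nat.cast : ℕ → ℤ) hsummu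
    push_cast at this
    exact this
  -- Σ m = p² * Σ f  in ℤ
  have e1 : ∑ i ∈ Finset.range n, (m i : ℤ) =
      (p : ℤ) ^ 2 * d - (p : ℤ) ^ 2 * ∑ i ∈ Finset.range n, (q i : ℤ) := by
    have hc : ∀ i ∈ Finset.range n, (m i : ℤ) = (lam i : ℤ) - (p : ℤ) ^ 2 * (q i : ℤ) := by
      intro i _
      have := hdecomp i
      have : (lam i : ℤ) = (p : ℤ) ^ 2 * q i + m i := by exact_mod_cast this
      linarith
    rw [Finset.sum_congr rfl hc, Finset.sum_sub_distrib, ← Finset.mul_sum, h2]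
  have e2 : (p : ℤ) ^ 2 * ∑ i ∈ Finset.range n, ((mu i : ℤ) - q i) =
      (p : ℤ) ^ 2 * d - (p : ℤ) ^ 2 * ∑ i ∈ Finset.range n, (q i : ℤ) := by
    rw [Finset.sum_sub_distrib, mul_sub, h3]
  have hpos : (0 : ℤ) < ∑ i ∈ Finset.range n, (m i : ℤ) := by
    have : (1 : ℤ) ≤ ((∑ i ∈ Finset.range n, m i : ℕ) : ℤ) := by exact_mod_cast hsumm
    push_cast at this
    linarith
  have hfinal : (0 : ℤ) < (p : ℤ) ^ 2 * ∑ i ∈ Finset.range n, ((mu i : ℤ) - q i) := by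
    rw [e2, ← e1]; exact hpos
  have hp2posZ : (0 : ℤ) < (p : ℤ) ^ 2 := by positivity
  nlinarith [hsum_le, hfinal, hp2posZ]
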